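/- Let κ ∈ (0,1) and g = −3/2 + κ. Let v₀ < v₁, let r : [v₀, v₁] → (0,∞) be continuously differentiable with r'(v) > 0 for all v, and let ψ : [v₀, v₁] → ℝ be continuously differentiable. Define the twisted derivative ∇̃ψ = ψ' − g(r'/r)ψ. Then ∫_{v₀}^{v₁} r'(v)ψ(v)² dv ≤ r(v₀)ψ(v₀)²/(1−κ) + (1−κ)^{−2} ∫_{v₀}^{v₁} (r(v)²/r'(v))(∇̃ψ(v))² dv. -/

import Mathlib

open Set intervalIntegral MeasureTheory

/-- Hardy estimate in `v` along an outgoing null ray: with `g = −3/2 + κ` and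
twisted derivative `∇̃ψ = ψ' − g(r'/r)ψ`,
`∫ r'ψ² ≤ r(v₀)ψ(v₀)²/(1−κ) + (1−κ)⁻² ∫ (r²/r')(∇̃ψ)²`. -/
theorem stmt_11 (κ g : ℝ) (hκ : κ ∈ Set.Ioo (0 : ℝ) 1) (hg : g = -3 / 2 + κ)
    (v₀ v₁ : ℝ) (hv : v₀ < v₁)
    (r ψ r' ψ' : ℝ → ℝ)
    (hr : ∀ v ∈ Set.Icc v₀ v₁, HasDerivWithinAt r (r' v) (Set.Icc v₀ v₁) v)
    (hr'c : ContinuousOn r' (Set.Icc v₀ v₁))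
    (hrpos : ∀ v ∈ Set.Icc v₀ v₁, 0 < r v)
    (hr'pos : ∀ v ∈ Set.Icc v₀ v₁, 0 < r' v)
    (hψ : ∀ v ∈ Set.Icc v₀ v₁, HasDerivWithinAt ψ (ψ' v) (Set.Icc v₀ v₁) v)
    (hψ'c : ContinuousOn ψ' (Set.Icc v₀ v₁)) :
    ∫ v in v₀..v₁, r' v * (ψ v) ^ 2
      ≤ r v₀ * (ψ v₀) ^ 2 / (1 - κ)
        + (1 / (1 - κ) ^ 2)
            * ∫ v in v₀..v₁, (r v) ^ 2 / r' v * (ψ' v - g * (r' v / r v) * ψ v) ^ 2 := by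
  obtain ⟨hκ0, hκ1⟩ := hκ
  have hk : 0 < 1 - κ := by linarith
  have hvle : v₀ ≤ v₁ := hv.le
  have huIcc : Set.uIcc v₀ v₁ = Set.Icc v₀ v₁ := Set.uIcc_of_le hvle
  have hrc : ContinuousOn r (Set.Icc v₀ v₁) := fun v hvm => (hr v hvm).continuousWithinAt
  have hψc : ContinuousOn ψ (Set.Icc v₀ v₁) := fun v hvm => (hψ v hvm).continuousWithinAt
  have hr'ne : ∀ v ∈ Set.Icc v₀ v₁, r' v ≠ 0 := fun v hvm => (hr'pos v hvm).ne'
  -- integrands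
  set F : ℝ → ℝ := fun v => r v * ψ v ^ 2 with hF
  set F' : ℝ → ℝ := fun v => r' v * ψ v ^ 2 + 2 * r v * ψ v * ψ' v with hF'
  set P : ℝ → ℝ := fun v => r' v * ψ v ^ 2 with hP
  set Q : ℝ → ℝ := fun v => (r v) ^ 2 / r' v * (ψ' v - g * (r' v / r v) * ψ v) ^ 2 with hQ
  have hF'c : ContinuousOn F' (Set.Icc v₀ v₁) := by
    apply ContinuousOn.add (hr'c.mul (hψc.pow 2))
    exact ((continuousOn_const.mul hrc).mul hψc).mul hψ'c
  have hPc : ContinuousOn P (Set.Icc v₀ v₁) := hr'c.mul (hψc.pow 2)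
  have hQc : ContinuousOn Q (Set.Icc v₀ v₁) := by
    apply ContinuousOn.mul ((hrc.pow 2).div hr'c hr'ne)
    exact (hψ'c.sub ((continuousOn_const.mul (hr'c.div hrc (fun v hvm => (hrpos v hvm).ne'))).mul hψc)).pow 2
  have hF'i : IntervalIntegrable F' MeasureTheory.volume v₀ v₁ :=
    (hF'c.mono (by rw [huIcc])).intervalIntegrable
  have hPi : IntervalIntegrable P MeasureTheory.volume v₀ v₁ :=
    (hPc.mono (by rw [huIcc])).intervalIntegrable
  have hQi : IntervalIntegrable Q MeasureTheory.volume v₀ v₁ :=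
    (hQc.mono (by rw [huIcc])).intervalIntegrable
  -- FTC
  have hFTC : ∫ v in v₀..v₁, F' v = F v₁ - F v₀ := by
    apply intervalIntegral.integral_eq_sub_of_hasDeriv_right_of_le hvle
      (hrc.mul (hψc.pow 2)) _ hF'i
    intro x hx
    have hxm : x ∈ Set.Icc v₀ v₁ := Set.mem_Icc_of_Ioo hx
    have h1 : HasDerivWithinAt F (r' x * ψ x ^ 2 + r x * (2 * ψ x ^ 1 * ψ' x))
        (Set.Icc v₀ v₁) x := (hr x hxm).mul ((hψ x hxm).pow 2)
    have h2 : HasDerivWithinAt F (F' x) (Set.Icc v₀ v₁) x := by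
      convert h1 using 1; simp [hF']; ring
    exact h2.mono_of_mem_nhdsWithin (Icc_mem_nhdsGT_of_mem ⟨hx.1.le, hx.2⟩)
  -- pointwise inequality
  have hpt : ∀ v ∈ Set.Icc v₀ v₁, (1 - κ) * P v + F' v ≤ (1 / (1 - κ)) * Q v := by
    intro v hvm
    have hR : 0 < r v := hrpos v hvm
    have ha : 0 < r' v := hr'pos v hvm
    have hn : r v * (ψ' v - g * (r' v / r v) * ψ v) = r v * ψ' v - g * r' v * ψ v := by
      field_simp
    have hQv : Q v = (r v * ψ' v - g * r' v * ψ v) ^ 2 / r' v := by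
      rw [hQ]
      rw [← hn]
      field_simp
    rw [hQv, mul_div_assoc', le_div_iff₀ ha]
    show ((1 - κ) * (r' v * ψ v ^ 2) + (r' v * ψ v ^ 2 + 2 * r v * ψ v * ψ' v)) * r' v
        ≤ 1 / (1 - κ) * (r v * ψ' v - g * r' v * ψ v) ^ 2
    have key : ((1 - κ) * (r' v * ψ v ^ 2) + (r' v * ψ v ^ 2 + 2 * r v * ψ v * ψ' v)) * r' v * (1 - κ)
        ≤ (r v * ψ' v - g * r' v * ψ v) ^ 2 := by
      have hid : (r v * ψ' v - g * r' v * ψ v) ^ 2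
          - ((1 - κ) * (r' v * ψ v ^ 2) + (r' v * ψ v ^ 2 + 2 * r v * ψ v * ψ' v)) * r' v * (1 - κ)
          = (r v * ψ' v + r' v * ψ v / 2) ^ 2 := by rw [hg]; ring
      linarith [sq_nonneg (r v * ψ' v + r' v * ψ v / 2)]
    calc ((1 - κ) * (r' v * ψ v ^ 2) + (r' v * ψ v ^ 2 + 2 * r v * ψ v * ψ' v)) * r' v
        = (((1 - κ) * (r' v * ψ v ^ 2) + (r' v * ψ v ^ 2 + 2 * r v * ψ v * ψ' v)) * r' v * (1 - κ)) * (1/(1-κ)) := by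
          field_simp
      _ ≤ (r v * ψ' v - g * r' v * ψ v) ^ 2 * (1/(1-κ)) := by
          apply mul_le_mul_of_nonneg_right key (by positivity)
      _ = 1 / (1 - κ) * (r v * ψ' v - g * r' v * ψ v) ^ 2 := by ring
  -- integrate pointwise
  have hmono : ∫ v in v₀..v₁, ((1 - κ) * P v + F' v) ≤ ∫ v in v₀..v₁, (1 / (1 - κ)) * Q v := by
    apply intervalIntegral.integral_mono_on hvle ((hPi.const_mul _).add hF'i) (hQi.const_mul _)
    exact hpt
  rw [intervalIntegral.integral_add (hPi.const_mul _) hF'i,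
    intervalIntegral.integral_const_mul, intervalIntegral.integral_const_mul, hFTC] at hmono
  have hF1 : 0 ≤ F v₁ := by
    have := hrpos v₁ ⟨hvle, le_rfl⟩; positivity
  have hF0 : F v₀ = r v₀ * ψ v₀ ^ 2 := rfl
  -- conclude
  have hgoal : (1 - κ) * ∫ v in v₀..v₁, P v ≤ r v₀ * ψ v₀ ^ 2 + (1 / (1 - κ)) * ∫ v in v₀..v₁, Q v := by
    linarith
  have h2 : ∫ v in v₀..v₁, P v ≤ (r v₀ * ψ v₀ ^ 2 + (1 / (1 - κ)) * ∫ v in v₀..v₁, Q v) / (1 - κ) := by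
    rw [le_div_iff₀ hk]; linarith
  calc ∫ v in v₀..v₁, r' v * (ψ v) ^ 2 = ∫ v in v₀..v₁, P v := rfl
    _ ≤ (r v₀ * ψ v₀ ^ 2 + (1 / (1 - κ)) * ∫ v in v₀..v₁, Q v) / (1 - κ) := h2
    _ = r v₀ * (ψ v₀) ^ 2 / (1 - κ) + (1 / (1 - κ) ^ 2) * ∫ v in v₀..v₁, Q v := by
        field_simp
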